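/- Let λ_max ≥ λ₀ > λ > 0 and assume Px̄* ≠ 0 and r > 0. Then d = m(λ₀ − λ)/(r·‖Px̄*‖₂) satisfies 0 < d ≤ 1; equivalently, 0 < m(λ₀ − λ) ≤ r·‖Px̄*‖₂. -/

import Mathlib

/-- The dual objective `g(θ) = (1/m) Σ_i [θ_i log θ_i + (1−θ_i) log(1−θ_i)]`. -/
noncomputable def g (m : ℕ) (θ : Fin m → ℝ) : ℝ :=
  (1 / (m : ℝ)) * ∑ i, (θ i * Real.log (θ i) + (1 - θ i) * Real.log (1 - θ i))

/-- The gradient of `g`, componentwise `(1/m) log(θ_i/(1−θ_i))`. -/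
noncomputable def gradg (m : ℕ) (θ : Fin m → ℝ) : Fin m → ℝ :=
  fun i => (1 / (m : ℝ)) * Real.log (θ i / (1 - θ i))
/-- The dual feasible set `F_λ`: componentwise in `(0,1)`, `|⟨θ, x̄^j⟩| ≤ mλ` for all
columns `x̄^j = X j`, and `⟨θ, b⟩ = 0`. -/
def Feas (m p : ℕ) (X : Fin p → Fin m → ℝ) (b : Fin m → ℝ) (lam : ℝ) :
    Set (Fin m → ℝ) :=
  {θ | (∀ i, 0 < θ i ∧ θ i < 1) ∧ (∀ j, |∑ i, θ i * X j i| ≤ (m : ℝ) * lam) ∧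
    ∑ i, θ i * b i = 0}
open scoped Classical in
/-- `m⁺ = #{i : b_i = 1}`. -/
noncomputable def mPlus (m : ℕ) (b : Fin m → ℝ) : ℕ :=
  (Finset.univ.filter (fun i => b i = 1)).card

open scoped Classical in
/-- `m⁻ = #{i : b_i = −1}`. -/
noncomputable def mMinus (m : ℕ) (b : Fin m → ℝ) : ℕ :=
  (Finset.univ.filter (fun i => b i = -1)).card

open scoped Classical in
/-- `θ_max`, with `(θ_max)_i = m⁻/m` if `b_i = 1` and `m⁺/m` if `b_i = −1`. -/
noncomputable def thetaMax (m : ℕ) (b : Fin m → ℝ) : Fin m → ℝ :=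
  fun i => if b i = 1 then (mMinus m b : ℝ) / m else (mPlus m b : ℝ) / m

/-- `λ_max = (1/m) max_j |⟨θ_max, x̄^j⟩|`. -/
noncomputable def lamMax (m p : ℕ) (X : Fin p → Fin m → ℝ) (b : Fin m → ℝ) : ℝ :=
  (1 / (m : ℝ)) * ⨆ j : Fin p, |∑ i, thetaMax m b i * X j i|
/-- `P`, the orthogonal projection onto the orthogonal complement of `b`:
`Pv = v − (⟨v,b⟩/‖b‖₂²) b`. -/
noncomputable def Pb (m : ℕ) (b : Fin m → ℝ) (v : Fin m → ℝ) : Fin m → ℝ :=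
  fun i => v i - ((∑ k, v k * b k) / (∑ k, (b k) ^ 2)) * b i


open Real Set

lemma aux_hasDeriv (c : ℝ) (hc0 : 0 < c) (hc1 : c < 1) (x : ℝ) (hx : x ∈ Set.Ioo (0:ℝ) 1) :
    HasDerivAt (fun y => y * (Real.log y - Real.log c) +
      (1 - y) * (Real.log (1 - y) - Real.log (1 - c)) - 2 * (y - c) ^ 2)
      (Real.log x - Real.log (1 - x) - Real.log c + Real.log (1 - c) - 4 * (x - c)) x := by
  obtain ⟨hx0, hx1⟩ := hx
  have h1x : (0:ℝ) < 1 - x := by linarith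
  have d1 : HasDerivAt (fun y : ℝ => y * (Real.log y - Real.log c))
      ((Real.log x - Real.log c) + x * x⁻¹) x :=
    (hasDerivAt_id x).mul ((Real.hasDerivAt_log hx0.ne').sub_const _) |>.congr_deriv (by simp only [id_eq]; ring)
  have d2' : HasDerivAt (fun y : ℝ => Real.log (1 - y)) (-(1 - x)⁻¹) x := by
    have := (Real.hasDerivAt_log h1x.ne').comp x ((hasDerivAt_id x).const_sub 1)
    simpa [Function.comp_def] using this.congr_deriv (by ring)
  have d2 : HasDerivAt (fun y : ℝ => (1 - y) * (Real.log (1 - y) - Real.log (1 - c)))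
      ((-1) * (Real.log (1 - x) - Real.log (1 - c)) + (1 - x) * (-(1 - x)⁻¹)) x :=
    ((hasDerivAt_id x).const_sub 1).mul (d2'.sub_const _)
  have d3 : HasDerivAt (fun y : ℝ => 2 * (y - c) ^ 2) (2 * (2 * (x - c))) x := by
    have := (((hasDerivAt_id x).sub_const c).pow 2).const_mul 2
    simpa using this.congr_deriv (by simp only [id_eq]; ring)
  have := (d1.add d2).sub d3
  apply this.congr_deriv
  field_simp
  ring

lemma aux_G_mono (c : ℝ) : MonotoneOn (fun x => Real.log x - Real.log (1 - x) - Real.log c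
    + Real.log (1 - c) - 4 * (x - c)) (Set.Ioo (0:ℝ) 1) := by
  have hconv : Convex ℝ (Set.Ioo (0:ℝ) 1) := convex_Ioo 0 1
  have hder : ∀ x ∈ Set.Ioo (0:ℝ) 1, HasDerivAt (fun x => Real.log x - Real.log (1 - x)
      - Real.log c + Real.log (1 - c) - 4 * (x - c)) (x⁻¹ + (1 - x)⁻¹ - 4) x := by
    intro x hx
    obtain ⟨hx0, hx1⟩ := hx
    have h1x : (0:ℝ) < 1 - x := by linarith
    have d2' : HasDerivAt (fun y : ℝ => Real.log (1 - y)) (-(1 - x)⁻¹) x := by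
      have := (Real.hasDerivAt_log h1x.ne').comp x ((hasDerivAt_id x).const_sub 1)
      simpa [Function.comp_def] using this.congr_deriv (by ring)
    have d4 : HasDerivAt (fun y : ℝ => 4 * (y - c)) 4 x := by
      simpa using ((hasDerivAt_id x).sub_const c).const_mul 4
    have := ((((Real.hasDerivAt_log hx0.ne').sub d2').sub_const (Real.log c)).add_const
      (Real.log (1 - c))).sub d4
    exact this.congr_deriv (by ring)
  apply monotoneOn_of_deriv_nonneg hconv
  · intro x hx
    exact (hder x hx).continuousAt.continuousWithinAt
  · intro x hx
    rw [interior_Ioo] at hx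
    exact (hder x hx).differentiableAt.differentiableWithinAt
  · intro x hx
    rw [interior_Ioo] at hx
    rw [(hder x hx).deriv]
    obtain ⟨hx0, hx1⟩ := hx
    have h1x : (0:ℝ) < 1 - x := by linarith
    have : x⁻¹ + (1 - x)⁻¹ - 4 = (1 - 2 * x) ^ 2 / (x * (1 - x)) := by
      field_simp; ring
    rw [this]
    positivity

lemma pinsker_bernoulli (a c : ℝ) (ha0 : 0 < a) (ha1 : a < 1) (hc0 : 0 < c) (hc1 : c < 1) :
    2 * (a - c) ^ 2 ≤ a * (Real.log a - Real.log c)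
      + (1 - a) * (Real.log (1 - a) - Real.log (1 - c)) := by
  set F : ℝ → ℝ := fun y => y * (Real.log y - Real.log c) +
      (1 - y) * (Real.log (1 - y) - Real.log (1 - c)) - 2 * (y - c) ^ 2 with hF
  set G : ℝ → ℝ := fun x => Real.log x - Real.log (1 - x) - Real.log c
    + Real.log (1 - c) - 4 * (x - c) with hG
  have hGc : G c = 0 := by simp [hG]
  have hFc : F c = 0 := by simp [hF]
  suffices h : 0 ≤ F a by
    simp only [hF] at h; linarith
  have hcont : ∀ s : Set ℝ, s ⊆ Set.Ioo (0:ℝ) 1 → ContinuousOn F s := by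
    intro s hs x hx
    exact (aux_hasDeriv c hc0 hc1 x (hs hx)).continuousAt.continuousWithinAt
  rcases le_or_gt c a with hca | hca
  · have hsub : Set.Icc c a ⊆ Set.Ioo (0:ℝ) 1 := fun x hx => ⟨lt_of_lt_of_le hc0 hx.1, lt_of_le_of_lt hx.2 ha1⟩
    have hmono : MonotoneOn F (Set.Icc c a) := by
      apply monotoneOn_of_deriv_nonneg (convex_Icc c a) (hcont _ hsub)
      · intro x hx
        rw [interior_Icc] at hx
        exact (aux_hasDeriv c hc0 hc1 x (hsub <| Set.Ioo_subset_Icc_self hx)).differentiableAt.differentiableWithinAt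
      · intro x hx
        rw [interior_Icc] at hx
        rw [(aux_hasDeriv c hc0 hc1 x (hsub <| Set.Ioo_subset_Icc_self hx)).deriv]
        have : G c ≤ G x := aux_G_mono c ⟨hc0, hc1⟩ (hsub <| Set.Ioo_subset_Icc_self hx) hx.1.le
        rw [hGc] at this
        exact this
    have := hmono (Set.left_mem_Icc.2 hca) (Set.right_mem_Icc.2 hca) hca
    rw [hFc] at this; exact this
  · have hsub : Set.Icc a c ⊆ Set.Ioo (0:ℝ) 1 := fun x hx => ⟨lt_of_lt_of_le ha0 hx.1, lt_of_le_of_lt hx.2 hc1⟩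
    have hmono : AntitoneOn F (Set.Icc a c) := by
      apply antitoneOn_of_deriv_nonpos (convex_Icc a c) (hcont _ hsub)
      · intro x hx
        rw [interior_Icc] at hx
        exact (aux_hasDeriv c hc0 hc1 x (hsub <| Set.Ioo_subset_Icc_self hx)).differentiableAt.differentiableWithinAt
      · intro x hx
        rw [interior_Icc] at hx
        rw [(aux_hasDeriv c hc0 hc1 x (hsub <| Set.Ioo_subset_Icc_self hx)).deriv]
        have : G x ≤ G c := aux_G_mono c (hsub <| Set.Ioo_subset_Icc_self hx) ⟨hc0, hc1⟩ hx.2.le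
        rw [hGc] at this
        exact this
    have := hmono (Set.left_mem_Icc.2 hca.le) (Set.right_mem_Icc.2 hca.le) hca.le
    rw [hFc] at this; exact this

/-- Lemma C: for `λ_max ≥ λ₀ > λ > 0` with `Px̄* ≠ 0` and `r > 0`, the quantity
`d = m(λ₀ − λ)/(r‖Px̄*‖₂)` satisfies `0 < d ≤ 1`. -/
theorem slores_d_in_unit_interval
 (m p : ℕ) (hm : 1 ≤ m) (hp : 1 ≤ p)
    (X : Fin p → Fin m → ℝ) (b : Fin m → ℝ) (hb : ∀ i, b i = 1 ∨ b i = -1)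
    (hmp : 1 ≤ mPlus m b) (hmm : 1 ≤ mMinus m b) (hlmax : 0 < lamMax m p X b)
    (lam lam₀ : ℝ) (hlam : 0 < lam) (hll : lam < lam₀) (hle : lam₀ ≤ lamMax m p X b)
    (θ₀ : Fin m → ℝ)
    (hθ₀ : θ₀ ∈ Feas m p X b lam₀ ∧ ∀ θ ∈ Feas m p X b lam₀, g m θ₀ ≤ g m θ)
    (r : ℝ)
    (hr : r = Real.sqrt (((m : ℝ) / 2) * (g m (fun i => (lam / lam₀) * θ₀ i) - g m θ₀
      + (1 - lam / lam₀) * ∑ i, gradg m θ₀ i * θ₀ i)))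
    (j₀ : Fin p) (hj₀ : |∑ i, θ₀ i * X j₀ i| = (m : ℝ) * lam₀)
    (xstar : Fin m → ℝ)
    (hxstar : xstar = fun i => Real.sign (∑ k, θ₀ k * X j₀ k) * X j₀ i)
    (A : Set (Fin m → ℝ))
    (hA : A = {θ | ∑ i, (θ i - θ₀ i) ^ 2 ≤ r ^ 2 ∧ ∑ i, θ i * b i = 0 ∧
      ∑ i, θ i * xstar i ≤ (m : ℝ) * lam})
    (hPxs : Pb m b xstar ≠ 0) (hr0 : 0 < r)
    (d : ℝ) (hd : d = (m : ℝ) * (lam₀ - lam) / (r * Real.sqrt (∑ i, (Pb m b xstar i) ^ 2))) :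
    0 < d ∧ d ≤ 1 := by

  have hM : (0:ℝ) < m := by exact_mod_cast hm
  have hMne : ((m:ℝ)) ≠ 0 := ne_of_gt hM
  have hlam₀ : 0 < lam₀ := lt_trans hlam hll
  set t := lam / lam₀ with htdef
  have ht0 : 0 < t := div_pos hlam hlam₀
  have ht1 : t < 1 := (div_lt_one hlam₀).2 hll
  obtain ⟨⟨hθpos, hθX, hθb⟩, -⟩ := hθ₀
  set s := ∑ i, θ₀ i * X j₀ i with hsdef
  have hsne : s ≠ 0 := by
    intro h
    rw [h, abs_zero] at hj₀
    nlinarith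
  have hsgn : Real.sign s * s = |s| := by
    rcases hsne.lt_or_gt with h | h
    · rw [Real.sign_of_neg h, abs_of_neg h]; ring
    · rw [Real.sign_of_pos h, abs_of_pos h]; ring
  have hθxs : ∑ i, θ₀ i * xstar i = (m:ℝ) * lam₀ := by
    calc ∑ i, θ₀ i * xstar i = Real.sign s * ∑ i, θ₀ i * X j₀ i := by
          rw [hxstar, Finset.mul_sum]
          exact Finset.sum_congr rfl fun i _ => by ring
      _ = |s| := hsgn
      _ = (m:ℝ) * lam₀ := hj₀
  set θ' : Fin m → ℝ := fun i => t * θ₀ i with hθ'def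
  have hθ'i : ∀ i, θ' i = t * θ₀ i := fun i => rfl
  have hθ'xs : ∑ i, θ' i * xstar i = (m:ℝ) * lam := by
    have h1 : ∑ i, θ' i * xstar i = t * ∑ i, θ₀ i * xstar i := by
      rw [Finset.mul_sum]
      exact Finset.sum_congr rfl fun i _ => by rw [hθ'i]; ring
    rw [h1, hθxs, htdef]
    field_simp
  have hθ'pos : ∀ i, 0 < θ' i ∧ θ' i < 1 := by
    intro i
    obtain ⟨h0, h1⟩ := hθpos i
    refine ⟨mul_pos ht0 h0, ?_⟩
    rw [hθ'i]
    nlinarith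
  -- key per-coordinate identity
  have key : ∀ i ∈ Finset.univ, (θ' i * Real.log (θ' i) + (1 - θ' i) * Real.log (1 - θ' i))
      - (θ₀ i * Real.log (θ₀ i) + (1 - θ₀ i) * Real.log (1 - θ₀ i))
      + (1 - t) * (Real.log (θ₀ i / (1 - θ₀ i)) * θ₀ i)
      = θ' i * (Real.log (θ' i) - Real.log (θ₀ i))
        + (1 - θ' i) * (Real.log (1 - θ' i) - Real.log (1 - θ₀ i)) := by
    intro i _
    obtain ⟨h0, h1⟩ := hθpos i
    rw [Real.log_div h0.ne' (by linarith), hθ'i]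
    ring
  have sum_eq : ∑ i, (θ' i * Real.log (θ' i) + (1 - θ' i) * Real.log (1 - θ' i))
      - ∑ i, (θ₀ i * Real.log (θ₀ i) + (1 - θ₀ i) * Real.log (1 - θ₀ i))
      + (1 - t) * ∑ i, Real.log (θ₀ i / (1 - θ₀ i)) * θ₀ i
      = ∑ i, (θ' i * (Real.log (θ' i) - Real.log (θ₀ i))
        + (1 - θ' i) * (Real.log (1 - θ' i) - Real.log (1 - θ₀ i))) := by
    rw [← Finset.sum_sub_distrib, Finset.mul_sum, ← Finset.sum_add_distrib]
    exact Finset.sum_congr rfl key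
  have hEeq : ((m : ℝ) / 2) * (g m θ' - g m θ₀
      + (1 - t) * ∑ i, gradg m θ₀ i * θ₀ i)
      = (1/2) * ∑ i, (θ' i * (Real.log (θ' i) - Real.log (θ₀ i))
        + (1 - θ' i) * (Real.log (1 - θ' i) - Real.log (1 - θ₀ i))) := by
    simp only [g, gradg]
    rw [← sum_eq]
    have e1 : ∑ i, 1 / (m:ℝ) * Real.log (θ₀ i / (1 - θ₀ i)) * θ₀ i
        = 1 / (m:ℝ) * ∑ i, Real.log (θ₀ i / (1 - θ₀ i)) * θ₀ i := by
      rw [Finset.mul_sum]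
      exact Finset.sum_congr rfl fun i _ => by ring
    rw [e1]
    field_simp
  have hKLge : ∀ i ∈ Finset.univ, 2 * (θ' i - θ₀ i) ^ 2
      ≤ θ' i * (Real.log (θ' i) - Real.log (θ₀ i))
        + (1 - θ' i) * (Real.log (1 - θ' i) - Real.log (1 - θ₀ i)) := by
    intro i _
    exact pinsker_bernoulli _ _ (hθ'pos i).1 (hθ'pos i).2 (hθpos i).1 (hθpos i).2
  have hsum : ∑ i, (θ' i - θ₀ i) ^ 2 ≤ (1/2) * ∑ i, (θ' i * (Real.log (θ' i) - Real.log (θ₀ i))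
        + (1 - θ' i) * (Real.log (1 - θ' i) - Real.log (1 - θ₀ i))) := by
    have h2 := Finset.sum_le_sum hKLge
    have h3 : ∑ i, 2 * (θ' i - θ₀ i) ^ 2 = 2 * ∑ i, (θ' i - θ₀ i) ^ 2 := by
      rw [Finset.mul_sum]
    linarith
  have hE0 : 0 ≤ (1/2) * ∑ i, (θ' i * (Real.log (θ' i) - Real.log (θ₀ i))
        + (1 - θ' i) * (Real.log (1 - θ' i) - Real.log (1 - θ₀ i))) :=
    le_trans (Finset.sum_nonneg fun i _ => sq_nonneg _) hsum
  have hr2 : r ^ 2 = (1/2) * ∑ i, (θ' i * (Real.log (θ' i) - Real.log (θ₀ i))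
        + (1 - θ' i) * (Real.log (1 - θ' i) - Real.log (1 - θ₀ i))) := by
    rw [hr, Real.sq_sqrt (by rw [hEeq]; exact hE0)]
    exact hEeq
  have hball : ∑ i, (θ' i - θ₀ i) ^ 2 ≤ r ^ 2 := by rw [hr2]; exact hsum
  -- projection identities
  have hub : ∑ i, (θ' i - θ₀ i) * b i = 0 := by
    have h1 : ∑ i, (θ' i - θ₀ i) * b i = (t - 1) * ∑ i, θ₀ i * b i := by
      rw [Finset.mul_sum]
      exact Finset.sum_congr rfl fun i _ => by rw [hθ'i]; ring
    rw [h1, hθb, mul_zero]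
  have huv : ∑ i, (θ' i - θ₀ i) * Pb m b xstar i = (m:ℝ) * lam - (m:ℝ) * lam₀ := by
    have h1 : ∑ i, (θ' i - θ₀ i) * Pb m b xstar i
        = ∑ i, (θ' i - θ₀ i) * xstar i
          - ((∑ k, xstar k * b k) / (∑ k, (b k) ^ 2)) * ∑ i, (θ' i - θ₀ i) * b i := by
      simp only [Pb]
      rw [Finset.mul_sum, ← Finset.sum_sub_distrib]
      exact Finset.sum_congr rfl fun i _ => by ring
    have h2 : ∑ i, (θ' i - θ₀ i) * xstar i = (m:ℝ) * lam - (m:ℝ) * lam₀ := by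
      have h3 : ∑ i, (θ' i - θ₀ i) * xstar i
          = ∑ i, θ' i * xstar i - ∑ i, θ₀ i * xstar i := by
        rw [← Finset.sum_sub_distrib]
        exact Finset.sum_congr rfl fun i _ => by ring
      rw [h3, hθ'xs, hθxs]
    rw [h1, h2, hub, mul_zero, sub_zero]
  have hcs : (∑ i, (θ' i - θ₀ i) * Pb m b xstar i) ^ 2
      ≤ (∑ i, (θ' i - θ₀ i) ^ 2) * ∑ i, (Pb m b xstar i) ^ 2 :=
    Finset.sum_mul_sq_le_sq_mul_sq Finset.univ
      (fun i => θ' i - θ₀ i) (fun i => Pb m b xstar i)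
  have hvpos : 0 < ∑ i, (Pb m b xstar i) ^ 2 := by
    obtain ⟨i, hi⟩ := Function.ne_iff.mp hPxs
    exact Finset.sum_pos' (fun j _ => sq_nonneg _)
      ⟨i, Finset.mem_univ i, lt_of_le_of_ne (sq_nonneg _) (Ne.symm (pow_ne_zero 2 hi))⟩
  set q := Real.sqrt (∑ i, (Pb m b xstar i) ^ 2) with hqdef
  have hq0 : 0 < q := Real.sqrt_pos.2 hvpos
  have hq2 : q ^ 2 = ∑ i, (Pb m b xstar i) ^ 2 := Real.sq_sqrt hvpos.le
  have husq : 0 ≤ ∑ i, (θ' i - θ₀ i) ^ 2 := Finset.sum_nonneg fun i _ => sq_nonneg _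
  have key2 : (m:ℝ) * (lam₀ - lam) ≤ r * q := by
    rw [huv] at hcs
    have h1 : ((m:ℝ) * (lam₀ - lam)) ^ 2 ≤ (r * q) ^ 2 := by
      calc ((m:ℝ) * (lam₀ - lam)) ^ 2 = ((m:ℝ) * lam - (m:ℝ) * lam₀) ^ 2 := by ring
        _ ≤ (∑ i, (θ' i - θ₀ i) ^ 2) * ∑ i, (Pb m b xstar i) ^ 2 := hcs
        _ ≤ r ^ 2 * ∑ i, (Pb m b xstar i) ^ 2 :=
            mul_le_mul_of_nonneg_right hball hvpos.le
        _ = (r * q) ^ 2 := by rw [mul_pow, hq2]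
    exact le_of_pow_le_pow_left₀ two_ne_zero (mul_pos hr0 hq0).le h1
  have hnum : 0 < (m:ℝ) * (lam₀ - lam) := mul_pos hM (by linarith)
  constructor
  · rw [hd]
    exact div_pos hnum (mul_pos hr0 hq0)
  · rw [hd, div_le_one (mul_pos hr0 hq0)]
    exact key2
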